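/- Let ν : Z_N → ℝ≥0 be a measure satisfying the (d·2^d, 2d)-linear forms condition, let μ = ν ⊗ ... ⊗ ν (d-fold tensor product) on Z_N^d, and let e = {e_1,...,e_d} be a basis of Z_N^d in general position. Then ||μ − 1||_{□(e)^d} = o(1) as N → ∞. -/

import Mathlib

open Finset

/-- `ν` satisfies the `(m₀,t₀)`-linear forms condition at level `δ`: every
average of `ν` over at most `m₀` pairwise linearly independent nonzero integer
linear forms in at most `t₀` variables, with arbitrary constant terms, is
within `δ` of `1`. -/
def LinearFormsConditionAt (N : ℕ) [NeZero N] (ν : ZMod N → ℝ)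
    (m₀ t₀ : ℕ) (δ : ℝ) : Prop :=
  ∀ (m t : ℕ), m ≤ m₀ → t ≤ t₀ →
    ∀ (L : Fin m → Fin t → ℤ) (b : Fin m → ZMod N),
    (∀ i, (fun k => (L i k : ZMod N)) ≠ 0) →
    (∀ i j, i ≠ j → ∀ c : ZMod N,
      (fun k => (L i k : ZMod N)) ≠ fun k => c * (L j k : ZMod N)) →
    |(∑ x : Fin t → ZMod N, ∏ i : Fin m,
        ν (∑ k : Fin t, (L i k : ZMod N) * x k + b i)) / (N : ℝ) ^ t - 1| ≤ δ

lemma key_forms (d : ℕ) (N : ℕ) [NeZero N] (hN : N.Prime)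
    (ν : ZMod N → ℝ) (δ : ℝ)
    (H : LinearFormsConditionAt N ν (d * 2 ^ d) (2 * d) δ)
    (e : Fin d → (Fin d → ZMod N))
    (hgen : ∀ j : Fin d, (∀ i, e i j ≠ 0) ∧ (∀ i i', i ≠ i' → e i j ≠ e i' j))
    (S : Finset (Fin d → Bool)) :
    |(∑ x : Fin d → ZMod N, ∑ t : Fin d → ZMod N,
        ∏ ω ∈ S, ∏ j : Fin d, ν (x j + ∑ i : Fin d, if ω i then t i * e i j else 0)) /
      (N : ℝ) ^ (2 * d) - 1| ≤ δ := by
  haveI : Fact (1 < N) := ⟨hN.one_lt⟩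
  classical
  set m := S.card * d with hm
  have hmle : m ≤ d * 2 ^ d := by
    have h1 : S.card ≤ 2 ^ d := by
      simpa [Fintype.card_fun] using S.card_le_univ
    calc m = S.card * d := hm
      _ ≤ 2 ^ d * d := Nat.mul_le_mul_right d h1
      _ = d * 2 ^ d := Nat.mul_comm _ _
  -- index equivalences
  let E : Fin (2 * d) ≃ (Fin d ⊕ Fin d) := (finCongr (two_mul d)).trans finSumFinEquiv.symm
  let P : Fin m ≃ Fin S.card × Fin d := finProdFinEquiv.symm
  let eS : Fin S.card ≃ {x // x ∈ S} := S.equivFin.symm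
  let Ω : Fin m → (Fin d → Bool) := fun i => ((eS (P i).1 : {x // x ∈ S}) : Fin d → Bool)
  let J : Fin m → Fin d := fun i => (P i).2
  let L : Fin m → Fin (2 * d) → ℤ := fun i k =>
    Sum.elim (fun j' => if j' = J i then 1 else 0)
      (fun i' => if Ω i i' then ((e i' (J i)).val : ℤ) else 0) (E k)
  have hcast : ∀ (i : Fin m) (k : Fin (2 * d)), ((L i k : ℤ) : ZMod N) =
      Sum.elim (fun j' => if j' = J i then (1 : ZMod N) else 0)
        (fun i' => if Ω i i' then e i' (J i) else 0) (E k) := by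
    intro i k
    rcases h : E k with j' | i' <;> simp [L, h, apply_ite (fun z : ℤ => (z : ZMod N)),
      ZMod.natCast_val, ZMod.cast_id]
  -- evaluation of the forms
  have heval : ∀ (i : Fin m) (y : Fin (2 * d) → ZMod N),
      ∑ k, (L i k : ZMod N) * y k =
        y (E.symm (Sum.inl (J i))) +
          ∑ i' : Fin d, if Ω i i' then y (E.symm (Sum.inr i')) * e i' (J i) else 0 := by
    intro i y
    rw [← Equiv.sum_comp E.symm (fun k => (L i k : ZMod N) * y k)]
    rw [Fintype.sum_sum_type]
    congr 1
    · simp only [hcast, Equiv.apply_symm_apply, Sum.elim_inl, ite_mul, one_mul, zero_mul]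
      rw [Finset.sum_ite_eq' Finset.univ (J i) (fun j' => y (E.symm (Sum.inl j')))]
      simp
    · refine Finset.sum_congr rfl fun i' _ => ?_
      simp only [hcast, Equiv.apply_symm_apply, Sum.elim_inr, ite_mul, zero_mul]
      rcases h : Ω i i' with _ | _ <;> simp [h, mul_comm]
  have h1 : ∀ i, (fun k => ((L i k : ℤ) : ZMod N)) ≠ 0 := by
    intro i hcontra
    have := congrFun hcontra (E.symm (Sum.inl (J i)))
    rw [hcast] at this
    simp at this
  have h2 : ∀ i i', i ≠ i' → ∀ c : ZMod N,
      (fun k => ((L i k : ℤ) : ZMod N)) ≠ fun k => c * ((L i' k : ℤ) : ZMod N) := by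
    intro i i' hne c hcontra
    have hj := congrFun hcontra (E.symm (Sum.inl (J i)))
    rw [hcast, hcast] at hj
    simp only [Equiv.apply_symm_apply, Sum.elim_inl, if_true, eq_self_iff_true] at hj
    by_cases hJ : J i = J i'
    · rw [if_pos hJ, mul_one] at hj
      -- c = 1, and Ω i ≠ Ω i'
      have hΩ : Ω i ≠ Ω i' := by
        intro hΩeq
        apply hne
        have h1' : (P i).1 = (P i').1 := by
          have : eS (P i).1 = eS (P i').1 := Subtype.ext hΩeq
          exact eS.injective this
        have : P i = P i' := Prod.ext h1' hJ
        exact P.injective this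
      obtain ⟨i₀, hi₀⟩ : ∃ i₀, Ω i i₀ ≠ Ω i' i₀ := by
        by_contra hno
        push_neg at hno
        exact hΩ (funext hno)
      have ht := congrFun hcontra (E.symm (Sum.inr i₀))
      rw [hcast, hcast] at ht
      simp only [Equiv.apply_symm_apply, Sum.elim_inr, ← hj, one_mul, ← hJ] at ht
      have hez := (hgen (J i)).1 i₀
      rcases hb : Ω i i₀ <;> rcases hb' : Ω i' i₀ <;>
        simp [hb, hb'] at ht hi₀ <;> exact hez (by simp [ht])
    · rw [if_neg hJ, mul_zero] at hj
      exact one_ne_zero hj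
  have hH := H m (2 * d) hmle le_rfl L 0 h1 h2
  -- rewrite the averaged sum
  have hEq : (∑ y : Fin (2 * d) → ZMod N, ∏ i : Fin m,
        ν (∑ k : Fin (2 * d), ((L i k : ℤ) : ZMod N) * y k + (0 : Fin m → ZMod N) i)) =
      ∑ x : Fin d → ZMod N, ∑ t : Fin d → ZMod N,
        ∏ ω ∈ S, ∏ j : Fin d, ν (x j + ∑ i : Fin d, if ω i then t i * e i j else 0) := by
    have hpt : ∀ y : Fin (2 * d) → ZMod N,
        (∏ i : Fin m, ν (∑ k : Fin (2 * d), ((L i k : ℤ) : ZMod N) * y k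
            + (0 : Fin m → ZMod N) i)) =
        ∏ ω ∈ S, ∏ j : Fin d, ν (y (E.symm (Sum.inl j)) +
          ∑ i' : Fin d, if ω i' then y (E.symm (Sum.inr i')) * e i' j else 0) := by
      intro y
      rw [← Finset.prod_coe_sort S (fun ω => ∏ j : Fin d, ν (y (E.symm (Sum.inl j)) +
          ∑ i' : Fin d, if ω i' then y (E.symm (Sum.inr i')) * e i' j else 0))]
      rw [← Equiv.prod_comp eS (fun s : {x // x ∈ S} => ∏ j : Fin d,
          ν (y (E.symm (Sum.inl j)) +
            ∑ i' : Fin d, if (s : Fin d → Bool) i' then y (E.symm (Sum.inr i')) * e i' j else 0))]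
      rw [← Fintype.prod_prod_type' (fun a j => ν (y (E.symm (Sum.inl j)) +
          ∑ i' : Fin d, if (eS a : Fin d → Bool) i' then y (E.symm (Sum.inr i')) * e i' j else 0))]
      rw [← Equiv.prod_comp P (fun p : Fin S.card × Fin d =>
          ν (y (E.symm (Sum.inl p.2)) + ∑ i' : Fin d,
            if (eS p.1 : Fin d → Bool) i' then y (E.symm (Sum.inr i')) * e i' p.2 else 0))]
      refine Fintype.prod_congr _ _ fun i => ?_
      rw [Pi.zero_apply, add_zero, heval i y]
    calc (∑ y : Fin (2 * d) → ZMod N, ∏ i : Fin m,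
        ν (∑ k : Fin (2 * d), ((L i k : ℤ) : ZMod N) * y k + (0 : Fin m → ZMod N) i))
        = ∑ y : Fin (2 * d) → ZMod N,
            ∏ ω ∈ S, ∏ j : Fin d, ν (y (E.symm (Sum.inl j)) +
              ∑ i' : Fin d, if ω i' then y (E.symm (Sum.inr i')) * e i' j else 0) :=
          Fintype.sum_congr _ _ hpt
      _ = ∑ p : (Fin d → ZMod N) × (Fin d → ZMod N),
            ∏ ω ∈ S, ∏ j : Fin d, ν (p.1 j +
              ∑ i' : Fin d, if ω i' then p.2 i' * e i' j else 0) := by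
          refine Fintype.sum_equiv
            ((Equiv.arrowCongr E (Equiv.refl (ZMod N))).trans
              (Equiv.sumArrowEquivProdArrow _ _ _)) _ _ fun y => rfl
      _ = _ := Fintype.sum_prod_type _
  rw [hEq] at hH
  exact hH

/-- if `ν` satisfies the `(d·2^d, 2d)`-linear forms condition,
`μ = ν ⊗ ⋯ ⊗ ν` and `e` is a basis of `Z_N^d` in general position, then
`‖μ - 1‖_{□(e)^d} = o(1)` as `N → ∞`. -/
theorem tensor_measure_box_norm_small (d : ℕ) :
    ∀ ε : ℝ, 0 < ε → ∃ δ : ℝ, 0 < δ ∧ ∃ N₀ : ℕ, ∀ N : ℕ, N₀ ≤ N →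
    ∀ (_ : N.Prime) (_ : NeZero N) (ν : ZMod N → ℝ),
    (∀ n, 0 ≤ ν n) →
    LinearFormsConditionAt N ν (d * 2 ^ d) (2 * d) δ →
    ∀ e : Fin d → (Fin d → ZMod N),
    LinearIndependent (ZMod N) e →
    Submodule.span (ZMod N) (Set.range e) = ⊤ →
    (∀ j : Fin d, (∀ i, e i j ≠ 0) ∧ (∀ i i', i ≠ i' → e i j ≠ e i' j)) →
    (|(∑ x : Fin d → ZMod N, ∑ t : Fin d → ZMod N,
        ∏ ω : Fin d → Bool,
          ((∏ j : Fin d, ν ((x + ∑ i : Fin d, if ω i then t i • e i else 0) j)) - 1)) /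
      (N : ℝ) ^ (2 * d)|) ^ ((1 : ℝ) / 2 ^ d) ≤ ε := by
  intro ε hε
  refine ⟨ε ^ (2 ^ d) / 2 ^ (2 ^ d), by positivity, 0, ?_⟩
  intro N _ hN _ ν hν H e _ _ hgen
  set δ : ℝ := ε ^ (2 ^ d) / 2 ^ (2 ^ d) with hδ
  set A : (Fin d → ZMod N) → (Fin d → ZMod N) → (Fin d → Bool) → ℝ :=
    fun x t ω => ∏ j : Fin d, ν (x j + ∑ i : Fin d, if ω i then t i * e i j else 0) with hA
  -- Step A : rewrite applications
  have hstepA : (∑ x : Fin d → ZMod N, ∑ t : Fin d → ZMod N,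
      ∏ ω : Fin d → Bool,
        ((∏ j : Fin d, ν ((x + ∑ i : Fin d, if ω i then t i • e i else 0) j)) - 1)) =
      ∑ x : Fin d → ZMod N, ∑ t : Fin d → ZMod N, ∏ ω : Fin d → Bool, (A x t ω - 1) := by
    refine Fintype.sum_congr _ _ fun x => Fintype.sum_congr _ _ fun t =>
      Fintype.prod_congr _ _ fun ω => ?_
    congr 1
    refine Fintype.prod_congr _ _ fun j => ?_
    congr 1
    simp [Finset.sum_apply, apply_ite (fun v : Fin d → ZMod N => v j)]
  rw [hstepA]
  -- expand product
  have hsplit : ∀ x t, (∏ ω : Fin d → Bool, (A x t ω - 1)) =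
      ∑ S ∈ (univ : Finset (Fin d → Bool)).powerset,
        (∏ ω ∈ S, A x t ω) * (-1 : ℝ) ^ (univ \ S).card := by
    intro x t
    have := Finset.prod_add (A x t) (fun _ => (-1 : ℝ)) univ
    simp only [Finset.prod_const] at this
    simpa [sub_eq_add_neg] using this
  have hsign : ∑ S ∈ (univ : Finset (Fin d → Bool)).powerset,
      (-1 : ℝ) ^ (univ \ S).card = 0 := by
    have := Finset.prod_add (fun _ : Fin d → Bool => (1 : ℝ)) (fun _ => (-1 : ℝ)) univ
    simp only [Finset.prod_const, one_pow, one_mul] at this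
    rw [← this]
    norm_num
  have hswap : (∑ x : Fin d → ZMod N, ∑ t : Fin d → ZMod N,
      ∏ ω : Fin d → Bool, (A x t ω - 1)) =
      ∑ S ∈ (univ : Finset (Fin d → Bool)).powerset,
        (∑ x : Fin d → ZMod N, ∑ t : Fin d → ZMod N, ∏ ω ∈ S, A x t ω) *
          (-1 : ℝ) ^ (univ \ S).card := by
    simp_rw [hsplit]
    calc (∑ x : Fin d → ZMod N, ∑ t : Fin d → ZMod N,
          ∑ S ∈ (univ : Finset (Fin d → Bool)).powerset,
            (∏ ω ∈ S, A x t ω) * (-1 : ℝ) ^ (univ \ S).card)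
        = ∑ x : Fin d → ZMod N, ∑ S ∈ (univ : Finset (Fin d → Bool)).powerset,
            ∑ t : Fin d → ZMod N, (∏ ω ∈ S, A x t ω) * (-1 : ℝ) ^ (univ \ S).card :=
          Finset.sum_congr rfl fun x _ => Finset.sum_comm
      _ = ∑ S ∈ (univ : Finset (Fin d → Bool)).powerset,
            ∑ x : Fin d → ZMod N, ∑ t : Fin d → ZMod N,
              (∏ ω ∈ S, A x t ω) * (-1 : ℝ) ^ (univ \ S).card := Finset.sum_comm
      _ = ∑ S ∈ (univ : Finset (Fin d → Bool)).powerset,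
            (∑ x : Fin d → ZMod N, ∑ t : Fin d → ZMod N, ∏ ω ∈ S, A x t ω) *
              (-1 : ℝ) ^ (univ \ S).card := by
          refine Finset.sum_congr rfl fun S _ => ?_
          rw [show (∑ x : Fin d → ZMod N, ∑ t : Fin d → ZMod N,
              (∏ ω ∈ S, A x t ω) * (-1 : ℝ) ^ #(univ \ S)) =
            ∑ x : Fin d → ZMod N, (∑ t : Fin d → ZMod N,
              ∏ ω ∈ S, A x t ω) * (-1 : ℝ) ^ #(univ \ S) from
            Finset.sum_congr rfl fun x _ => by rw [← Finset.sum_mul]]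
          rw [← Finset.sum_mul]
  rw [hswap]
  -- bound
  have hkey : ∀ S : Finset (Fin d → Bool),
      |(∑ x : Fin d → ZMod N, ∑ t : Fin d → ZMod N, ∏ ω ∈ S, A x t ω) /
        (N : ℝ) ^ (2 * d) - 1| ≤ δ := fun S => key_forms d N hN ν δ H e hgen S
  have habs : |(∑ S ∈ (univ : Finset (Fin d → Bool)).powerset,
      (∑ x : Fin d → ZMod N, ∑ t : Fin d → ZMod N, ∏ ω ∈ S, A x t ω) *
        (-1 : ℝ) ^ (univ \ S).card) / (N : ℝ) ^ (2 * d)| ≤ ε ^ (2 ^ d) := by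
    rw [Finset.sum_div]
    have hrw : ∀ S ∈ (univ : Finset (Fin d → Bool)).powerset,
        ((∑ x : Fin d → ZMod N, ∑ t : Fin d → ZMod N, ∏ ω ∈ S, A x t ω) *
          (-1 : ℝ) ^ (univ \ S).card) / (N : ℝ) ^ (2 * d) =
        ((∑ x : Fin d → ZMod N, ∑ t : Fin d → ZMod N, ∏ ω ∈ S, A x t ω) /
          (N : ℝ) ^ (2 * d) - 1) * (-1 : ℝ) ^ (univ \ S).card +
          (-1 : ℝ) ^ (univ \ S).card := by
      intro S _
      rw [sub_mul, one_mul, sub_add_cancel, mul_div_right_comm]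
    rw [Finset.sum_congr rfl hrw, Finset.sum_add_distrib, hsign, add_zero]
    calc |∑ S ∈ (univ : Finset (Fin d → Bool)).powerset,
          ((∑ x : Fin d → ZMod N, ∑ t : Fin d → ZMod N, ∏ ω ∈ S, A x t ω) /
            (N : ℝ) ^ (2 * d) - 1) * (-1 : ℝ) ^ (univ \ S).card|
        ≤ ∑ S ∈ (univ : Finset (Fin d → Bool)).powerset,
          |((∑ x : Fin d → ZMod N, ∑ t : Fin d → ZMod N, ∏ ω ∈ S, A x t ω) /
            (N : ℝ) ^ (2 * d) - 1) * (-1 : ℝ) ^ (univ \ S).card| :=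
          Finset.abs_sum_le_sum_abs _ _
      _ ≤ ∑ _S ∈ (univ : Finset (Fin d → Bool)).powerset, δ := by
          refine Finset.sum_le_sum fun S _ => ?_
          rw [abs_mul, abs_pow, abs_neg, abs_one, one_pow, mul_one]
          exact hkey S
      _ = ε ^ (2 ^ d) := by
          rw [Finset.sum_const, nsmul_eq_mul, Finset.card_powerset, Finset.card_univ]
          have : Fintype.card (Fin d → Bool) = 2 ^ d := by simp [Fintype.card_fun]
          rw [this, hδ]
          field_simp
          norm_num
  -- final rpow step
  have h2d : (0:ℝ) < 2 ^ d := by positivity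
  calc (|(∑ S ∈ (univ : Finset (Fin d → Bool)).powerset,
        (∑ x : Fin d → ZMod N, ∑ t : Fin d → ZMod N, ∏ ω ∈ S, A x t ω) *
          (-1 : ℝ) ^ (univ \ S).card) / (N : ℝ) ^ (2 * d)|) ^ ((1 : ℝ) / 2 ^ d)
      ≤ (ε ^ (2 ^ d)) ^ ((1 : ℝ) / 2 ^ d) :=
        Real.rpow_le_rpow (abs_nonneg _) habs (by positivity)
    _ = ε := by
        rw [← Real.rpow_natCast ε (2 ^ d), ← Real.rpow_mul hε.le]
        rw [show ((2 ^ d : ℕ) : ℝ) * ((1 : ℝ) / 2 ^ d) = 1 by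
          push_cast
          field_simp]
        exact Real.rpow_one ε
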